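/- Matrix form of the non-weightedness certificate: let (v,N) be a complete simple game with type composition (n_1,…,n_t), let S̃ be a p×t matrix whose rows are winning vectors and L̃ a q×t matrix whose rows are losing vectors. If there exist row vectors x∈ℝ_{≥0}^p, y∈ℝ_{≥0}^q with ‖x‖_1=‖y‖_1>0 and xS̃ ≤ yL̃ componentwise, then (v,N) is not weighted. -/
import Mathlib


def SimpleGame (n : ℕ) (W : Finset (Fin n) → Prop) : Prop :=
  ¬ W ∅ ∧ W Finset.univ ∧ ∀ ⦃S T : Finset (Fin n)⦄, S ⊆ T → W S → W T

def Desir {n : ℕ} (W : Finset (Fin n) → Prop) (i j : Fin n) : Prop :=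
  ∀ S : Finset (Fin n), j ∈ S → i ∉ S → W S → W (insert i (S.erase j))

def DesirTotalPreorder {n : ℕ} (W : Finset (Fin n) → Prop) : Prop :=
  (∀ i, Desir W i i) ∧ (∀ i j, Desir W i j ∨ Desir W j i) ∧
    (∀ i j k, Desir W i j → Desir W j k → Desir W i k)

def IsDesirPartition {n t : ℕ} (W : Finset (Fin n) → Prop) (part : Fin n → Fin t) : Prop :=
  ∀ i j, (Desir W i j ∧ Desir W j i) ↔ part i = part j

def VecWinning {n t : ℕ} (W : Finset (Fin n) → Prop) (part : Fin n → Fin t)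
    (s : Fin t → ℕ) : Prop :=
  ∀ S : Finset (Fin n),
    (∀ c, (S.filter (fun i => part i = c)).card = s c) → W S

def VecLosing {n t : ℕ} (W : Finset (Fin n) → Prop) (part : Fin n → Fin t)
    (s : Fin t → ℕ) : Prop :=
  ∀ S : Finset (Fin n),
    (∀ c, (S.filter (fun i => part i = c)).card = s c) → ¬ W S

def IsWeighted {n : ℕ} (W : Finset (Fin n) → Prop) : Prop :=
  ∃ q : ℝ, 0 < q ∧ ∃ w : Fin n → ℝ, (∀ i, 0 ≤ w i) ∧
    ∀ S : Finset (Fin n), W S ↔ q ≤ ∑ i ∈ S, w i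

lemma exists_min_subset {α : Type*} [DecidableEq α] (w : α → ℝ) :
    ∀ (k : ℕ) (F : Finset α), k ≤ F.card →
    ∃ T ⊆ F, T.card = k ∧ ∀ a ∈ T, ∀ b ∈ F \ T, w a ≤ w b := by
  intro k
  induction k with
  | zero => intro F _; exact ⟨∅, by simp, by simp, by simp⟩
  | succ k ih =>
    intro F hk
    obtain ⟨T, hTF, hTc, hmin⟩ := ih F (Nat.le_of_succ_le hk)
    have hne : (F \ T).Nonempty := by
      rw [← Finset.card_pos, Finset.card_sdiff_of_subset hTF]
      omega
    obtain ⟨b, hb, hbmin⟩ := Finset.exists_min_image (F \ T) w hne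
    refine ⟨insert b T, ?_, ?_, ?_⟩
    · exact Finset.insert_subset (Finset.mem_sdiff.1 hb).1 hTF
    · rw [Finset.card_insert_of_notMem (Finset.mem_sdiff.1 hb).2, hTc]
    · intro a ha c hc
      have hc' : c ∈ F \ T := by
        rw [Finset.mem_sdiff] at hc ⊢
        exact ⟨hc.1, fun h => hc.2 (Finset.mem_insert_of_mem h)⟩
      rcases Finset.mem_insert.1 ha with rfl | ha
      · exact hbmin c hc'
      · exact hmin a ha c hc'

lemma min_subset_sum_le {α : Type*} [DecidableEq α] (w : α → ℝ) (F T : Finset α)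
    (hTF : T ⊆ F) (hmin : ∀ a ∈ T, ∀ b ∈ F \ T, w a ≤ w b) :
    ∑ a ∈ T, w a ≤ (T.card : ℝ) * ((∑ a ∈ F, w a) / F.card) := by
  rcases Nat.eq_zero_or_pos F.card with h0 | hFpos
  · have : F = ∅ := Finset.card_eq_zero.mp h0
    subst this
    have : T = ∅ := Finset.subset_empty.mp hTF
    subst this
    simp
  have hn : (0:ℝ) < F.card := by exact_mod_cast hFpos
  have hsplit : ∑ a ∈ F \ T, w a + ∑ a ∈ T, w a = ∑ a ∈ F, w a :=
    Finset.sum_sdiff hTF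
  have hcardn : T.card + (F \ T).card = F.card := by
    have := Finset.card_le_card hTF
    rw [Finset.card_sdiff_of_subset hTF]; omega
  have hcard : (T.card : ℝ) + ((F \ T).card : ℝ) = (F.card : ℝ) := by
    exact_mod_cast hcardn
  have key : ((F \ T).card : ℝ) * ∑ a ∈ T, w a ≤ (T.card : ℝ) * ∑ b ∈ F \ T, w b := by
    have h := Finset.sum_le_sum (fun a (ha : a ∈ T) =>
      Finset.sum_le_sum (fun b (hb : b ∈ F \ T) => hmin a ha b hb))
    simpa [Finset.sum_const, nsmul_eq_mul, Finset.mul_sum, Finset.sum_mul,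
      mul_comm, Finset.sum_comm] using h
  rw [mul_div_assoc', le_div_iff₀ hn]
  have e1 : (∑ a ∈ T, w a) * (F.card : ℝ)
      = (∑ a ∈ T, w a) * T.card + (∑ a ∈ T, w a) * ((F \ T).card : ℝ) := by
    rw [← hcard]; ring
  have e2 : (T.card : ℝ) * (∑ a ∈ F, w a)
      = (T.card : ℝ) * (∑ b ∈ F \ T, w b) + (T.card : ℝ) * ∑ a ∈ T, w a := by
    rw [← hsplit]; ring
  linarith [key]

lemma light_subset {α : Type*} [DecidableEq α] (w : α → ℝ) (k : ℕ) (F : Finset α)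
    (hk : k ≤ F.card) :
    ∃ T ⊆ F, T.card = k ∧ ∑ a ∈ T, w a ≤ (k : ℝ) * ((∑ a ∈ F, w a) / F.card) := by
  obtain ⟨T, hTF, hTc, hmin⟩ := exists_min_subset w k F hk
  exact ⟨T, hTF, hTc, by simpa [hTc] using min_subset_sum_le w F T hTF hmin⟩

lemma heavy_subset {α : Type*} [DecidableEq α] (w : α → ℝ) (k : ℕ) (F : Finset α)
    (hk : k ≤ F.card) :
    ∃ T ⊆ F, T.card = k ∧ (k : ℝ) * ((∑ a ∈ F, w a) / F.card) ≤ ∑ a ∈ T, w a := by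
  obtain ⟨T, hTF, hTc, hle⟩ := light_subset (fun a => -w a) k F hk
  refine ⟨T, hTF, hTc, ?_⟩
  simp only [Finset.sum_neg_distrib, neg_div, mul_neg, neg_le_neg_iff] at hle
  linarith

theorem matrix_certificate_not_weighted' {n t p q : ℕ} (W : Finset (Fin n) → Prop)
    (part : Fin n → Fin t)
    (Smat : Fin p → Fin t → ℕ) (Lmat : Fin q → Fin t → ℕ)
    (hSb : ∀ i c, Smat i c ≤ (Finset.univ.filter (fun a => part a = c)).card)
    (hLb : ∀ j c, Lmat j c ≤ (Finset.univ.filter (fun a => part a = c)).card)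
    (hS : ∀ i, ∀ S : Finset (Fin n),
      (∀ c, (S.filter (fun i => part i = c)).card = Smat i c) → W S)
    (hL : ∀ j, ∀ S : Finset (Fin n),
      (∀ c, (S.filter (fun i => part i = c)).card = Lmat j c) → ¬ W S)
    (x : Fin p → ℝ) (y : Fin q → ℝ)
    (hx : ∀ i, 0 ≤ x i) (hy : ∀ j, 0 ≤ y j)
    (hsum : ∑ i, x i = ∑ j, y j) (hpos : 0 < ∑ i, x i)
    (hcert : ∀ c : Fin t, ∑ i, x i * (Smat i c : ℝ) ≤ ∑ j, y j * (Lmat j c : ℝ)) :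
    ¬ IsWeighted W := by
  rintro ⟨Q, hQpos, w, hw, hrep⟩
  set cls : Fin t → Finset (Fin n) := fun c => Finset.univ.filter (fun a => part a = c) with hcls
  set ω : Fin t → ℝ := fun c => (∑ a ∈ cls c, w a) / ((cls c).card : ℝ) with hω
  have hω0 : ∀ c, 0 ≤ ω c := fun c =>
    div_nonneg (Finset.sum_nonneg fun a _ => hw a) (Nat.cast_nonneg _)
  -- winning rows
  have hSval : ∀ i, Q ≤ ∑ c, (Smat i c : ℝ) * ω c := by
    intro i
    choose T hT1 hT2 hT3 using fun c => light_subset w (Smat i c) (cls c) (hSb i c)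
    set A : Finset (Fin n) := Finset.univ.filter (fun a => a ∈ T (part a)) with hA
    have hfib : ∀ c, A.filter (fun a => part a = c) = T c := by
      intro c
      ext a
      simp only [hA, Finset.mem_filter, Finset.mem_univ, true_and]
      constructor
      · rintro ⟨h1, h2⟩; rwa [h2] at h1
      · intro h
        have : part a = c := by
          have := hT1 c h
          simpa [hcls] using this
        exact ⟨by rwa [this], this⟩
    have hWA : W A := hS i A (fun c => by rw [hfib c]; exact hT2 c)
    have hQA : Q ≤ ∑ a ∈ A, w a := (hrep A).1 hWA
    have hsplit : ∑ a ∈ A, w a = ∑ c, ∑ a ∈ A.filter (fun a => part a = c), w a :=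
      (Finset.sum_fiberwise A part w).symm
    calc Q ≤ ∑ a ∈ A, w a := hQA
    _ = ∑ c, ∑ a ∈ T c, w a := by rw [hsplit]; exact Finset.sum_congr rfl fun c _ => by rw [hfib c]
    _ ≤ ∑ c, (Smat i c : ℝ) * ω c := Finset.sum_le_sum fun c _ => hT3 c
  -- losing rows
  have hLval : ∀ j, ∑ c, (Lmat j c : ℝ) * ω c < Q := by
    intro j
    choose T hT1 hT2 hT3 using fun c => heavy_subset w (Lmat j c) (cls c) (hLb j c)
    set A : Finset (Fin n) := Finset.univ.filter (fun a => a ∈ T (part a)) with hA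
    have hfib : ∀ c, A.filter (fun a => part a = c) = T c := by
      intro c
      ext a
      simp only [hA, Finset.mem_filter, Finset.mem_univ, true_and]
      constructor
      · rintro ⟨h1, h2⟩; rwa [h2] at h1
      · intro h
        have : part a = c := by
          have := hT1 c h
          simpa [hcls] using this
        exact ⟨by rwa [this], this⟩
    have hWA : ¬ W A := hL j A (fun c => by rw [hfib c]; exact hT2 c)
    have hQA : ∑ a ∈ A, w a < Q := by
      by_contra hcon
      exact hWA ((hrep A).2 (le_of_not_gt hcon))
    have hsplit : ∑ a ∈ A, w a = ∑ c, ∑ a ∈ A.filter (fun a => part a = c), w a :=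
      (Finset.sum_fiberwise A part w).symm
    calc ∑ c, (Lmat j c : ℝ) * ω c ≤ ∑ c, ∑ a ∈ T c, w a :=
          Finset.sum_le_sum fun c _ => hT3 c
    _ = ∑ a ∈ A, w a := by
          rw [hsplit]; exact (Finset.sum_congr rfl fun c _ => by rw [hfib c]).symm
    _ < Q := hQA
  -- combine
  have h1 : Q * (∑ i, x i) ≤ ∑ i, x i * (∑ c, (Smat i c : ℝ) * ω c) := by
    rw [Finset.mul_sum]
    exact Finset.sum_le_sum fun i _ => by
      rw [mul_comm]
      exact mul_le_mul_of_nonneg_left (hSval i) (hx i)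
  have e1 : ∑ i, x i * (∑ c, (Smat i c : ℝ) * ω c)
      = ∑ c, (∑ i, x i * (Smat i c : ℝ)) * ω c := by
    simp_rw [Finset.mul_sum, Finset.sum_mul]
    rw [Finset.sum_comm]
    apply Finset.sum_congr rfl; intro c _
    apply Finset.sum_congr rfl; intro i _
    ring
  have e2 : ∑ j, y j * (∑ c, (Lmat j c : ℝ) * ω c)
      = ∑ c, (∑ j, y j * (Lmat j c : ℝ)) * ω c := by
    simp_rw [Finset.mul_sum, Finset.sum_mul]
    rw [Finset.sum_comm]
    apply Finset.sum_congr rfl; intro c _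
    apply Finset.sum_congr rfl; intro j _
    ring
  have h2 : ∑ c, (∑ i, x i * (Smat i c : ℝ)) * ω c
      ≤ ∑ c, (∑ j, y j * (Lmat j c : ℝ)) * ω c :=
    Finset.sum_le_sum fun c _ => mul_le_mul_of_nonneg_right (hcert c) (hω0 c)
  have hyex : ∃ j, 0 < y j := by
    by_contra hcon
    push_neg at hcon
    have : ∑ j, y j = 0 :=
      le_antisymm (Finset.sum_nonpos fun j _ => hcon j)
        (Finset.sum_nonneg fun j _ => hy j)
    rw [hsum, this] at hpos
    exact lt_irrefl 0 hpos
  obtain ⟨j0, hj0⟩ := hyex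
  have h3 : ∑ j, y j * (∑ c, (Lmat j c : ℝ) * ω c) < Q * (∑ j, y j) := by
    rw [Finset.mul_sum]
    apply Finset.sum_lt_sum
    · intro j _
      rw [mul_comm Q (y j)]
      exact mul_le_mul_of_nonneg_left (le_of_lt (hLval j)) (hy j)
    · exact ⟨j0, Finset.mem_univ j0, by
        rw [mul_comm Q (y j0)]
        exact mul_lt_mul_of_pos_left (hLval j0) hj0⟩
  rw [e1] at h1
  rw [e2] at h3
  have := lt_of_le_of_lt (le_trans h1 h2) h3
  rw [hsum] at this
  exact lt_irrefl _ this


/-- Matrix form of the non-weightedness certificate: if `x·S̃ ≤ y·L̃` with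
`‖x‖₁ = ‖y‖₁ > 0`, the complete simple game is not weighted. -/
theorem matrix_certificate_not_weighted {n t p q : ℕ} (W : Finset (Fin n) → Prop)
    (part : Fin n → Fin t) (hsg : SimpleGame n W) (hc : DesirTotalPreorder W)
    (hpart : IsDesirPartition W part)
    (Smat : Fin p → Fin t → ℕ) (Lmat : Fin q → Fin t → ℕ)
    (hSb : ∀ i c, Smat i c ≤ (Finset.univ.filter (fun a => part a = c)).card)
    (hLb : ∀ j c, Lmat j c ≤ (Finset.univ.filter (fun a => part a = c)).card)
    (hS : ∀ i, VecWinning W part (Smat i)) (hL : ∀ j, VecLosing W part (Lmat j))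
    (x : Fin p → ℝ) (y : Fin q → ℝ)
    (hx : ∀ i, 0 ≤ x i) (hy : ∀ j, 0 ≤ y j)
    (hsum : ∑ i, x i = ∑ j, y j) (hpos : 0 < ∑ i, x i)
    (hcert : ∀ c : Fin t, ∑ i, x i * (Smat i c : ℝ) ≤ ∑ j, y j * (Lmat j c : ℝ)) :
    ¬ IsWeighted W :=
  matrix_certificate_not_weighted' W part Smat Lmat hSb hLb hS hL x y hx hy hsum hpos hcert
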